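/- Let A be a Noetherian local ring with residue field k, and let Q¹ → Q² → Q³ be an exact sequence of finitely generated free A-modules (with maps d₁, d₂) which remains exact after tensoring with k. Then M = Ker(d₁) is a free A-module. -/
import Mathlib


/-- Lemma (3.2.3): over a Noetherian local ring `A` with residue field `k`,
if `Q¹ → Q² → Q³` is an exact sequence of finitely generated free `A`-modules
which remains exact after tensoring with `k`, then `M = ker d₁` is free. -/
theorem stmt0 (A : Type*) [CommRing A] [IsNoetherianRing A] [IsLocalRing A]
    (Q1 Q2 Q3 : Type*) [AddCommGroup Q1] [AddCommGroup Q2] [AddCommGroup Q3]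
    [Module A Q1] [Module A Q2] [Module A Q3]
    [Module.Free A Q1] [Module.Free A Q2] [Module.Free A Q3]
    [Module.Finite A Q1] [Module.Finite A Q2] [Module.Finite A Q3]
    (d1 : Q1 →ₗ[A] Q2) (d2 : Q2 →ₗ[A] Q3)
    (hex : Function.Exact d1 d2)
    (hexk : Function.Exact (d1.baseChange (IsLocalRing.ResidueField A))
      (d2.baseChange (IsLocalRing.ResidueField A))) :
    Module.Free A (LinearMap.ker d1) := by
  set k := IsLocalRing.ResidueField A
  have hsub : LinearMap.range d1 ≤ LinearMap.ker d2 :=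
    le_of_eq (LinearMap.exact_iff.mp hex).symm
  -- The cokernel `C = Q2 / range d1` injects into `Q3` via the induced map `d2'`.
  set C := Q2 ⧸ LinearMap.range d1 with hC
  set d2' : C →ₗ[A] Q3 := Submodule.liftQ _ d2 hsub with hd2'
  have hcomp : d2' ∘ₗ (LinearMap.range d1).mkQ = d2 := Submodule.liftQ_mkQ _ _ _
  -- `k ⊗ d2'` is injective by exactness of the tensored sequence.
  have hinj : Function.Injective (d2'.lTensor k) := by
    rw [injective_iff_map_eq_zero]
    intro x hx
    obtain ⟨y, rfl⟩ :=
      LinearMap.lTensor_surjective k (Submodule.mkQ_surjective (LinearMap.range d1)) x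
    have h0 : d2.baseChange k y = 0 := by
      rw [LinearMap.baseChange_eq_ltensor, ← hcomp, LinearMap.lTensor_comp,
        LinearMap.comp_apply]
      exact hx
    obtain ⟨z, rfl⟩ := (hexk y).mp h0
    rw [LinearMap.baseChange_eq_ltensor, ← LinearMap.comp_apply, ← LinearMap.lTensor_comp]
    have : (LinearMap.range d1).mkQ ∘ₗ d1 = 0 := by
      ext w
      simp [Submodule.Quotient.mk_eq_zero]
    rw [this, LinearMap.lTensor_zero, LinearMap.zero_apply]
  -- Hence `d2'` splits, so `C` is projective.
  obtain ⟨s, hs⟩ :=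
    (IsLocalRing.split_injective_iff_lTensor_residueField_injective d2').mpr hinj
  have hCproj : Module.Projective A C := Module.Projective.of_split d2' s hs
  -- So `0 → range d1 → Q2 → C → 0` splits and `range d1` is projective.
  obtain ⟨r, hr⟩ :=
    ((Function.Exact.split_tfae (LinearMap.exact_subtype_mkQ (LinearMap.range d1))
      Subtype.val_injective (Submodule.mkQ_surjective _)).out 1 0).mpr
      (Module.projective_lifting_property _ _ (Submodule.mkQ_surjective _))
  have hRproj : Module.Projective A (LinearMap.range d1) :=
    Module.Projective.of_split _ r hr
  -- So `0 → ker d1 → Q1 → range d1 → 0` splits and `ker d1` is projective.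
  have hexact : Function.Exact (LinearMap.ker d1).subtype
      (d1.codRestrict (LinearMap.range d1) (LinearMap.mem_range_self d1)) := by
    rw [LinearMap.exact_iff, LinearMap.ker_rangeRestrict, Submodule.range_subtype]
  have hsurj : Function.Surjective
      (d1.codRestrict (LinearMap.range d1) (LinearMap.mem_range_self d1)) :=
    fun ⟨x, y, e⟩ ↦ ⟨y, Subtype.ext e⟩
  obtain ⟨r1, hr1⟩ :=
    ((Function.Exact.split_tfae hexact Subtype.val_injective hsurj).out 1 0).mpr
      (Module.projective_lifting_property _ _ hsurj)
  have hKproj : Module.Projective A (LinearMap.ker d1) :=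
    Module.Projective.of_split _ r1 hr1
  -- Finally, finite projective over a local ring is free.
  have hKfin : Module.Finite A (LinearMap.ker d1) := by
    have : IsNoetherian A Q1 := isNoetherian_of_isNoetherianRing_of_finite A Q1
    exact Module.Finite.iff_fg.mpr (IsNoetherian.noetherian _)
  have : Module.FinitePresentation A (LinearMap.ker d1) :=
    Module.finitePresentation_of_projective A _
  exact Module.free_of_flat_of_isLocalRing
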